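/- Let τ = (1 + √5)/2 and λ_k = (⌈k/τ⌉ + kτ)/τ² for k ∈ ℤ, and let s ≥ 2. For each k ∈ ℤ with λ_{k+1} − λ_k = 1, let N_k be the smallest integer N ≥ 1 such that #{ i : 1 ≤ i ≤ N−1, λ_{k+i} − λ_{k+i−1} = 1 } = 2s − 1 (i.e. the open interval (λ_k, λ_{k+N}) contains exactly 2s−1 points of Λ \ τ²Λ). Then, with p = ⌈(2s−2)τ⌉ + 1, every such N_k equals p or p + 1. -/
import Mathlib


open MeasureTheory Set Filter

noncomputable section

/-- The golden mean `τ = (1 + √5)/2`. -/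
def tau : ℝ := (1 + Real.sqrt 5) / 2

/-- The cut-and-project model set `Σ^Ω = { a + bτ : a, b ∈ ℤ, a - b/τ ∈ Ω }`. -/
def SigmaSet (Ω : Set ℝ) : Set ℝ :=
  {x | ∃ a b : ℤ, x = (a : ℝ) + (b : ℝ) * tau ∧ (a : ℝ) - (b : ℝ) / tau ∈ Ω}

/-- The increasing enumeration `λ_k = (⌈k/τ⌉ + kτ)/τ²` of the rescaled Fibonacci
chain `Σ^{[0,τ²)}`. -/
def fibChain (k : ℤ) : ℝ := ((⌈(k : ℝ) / tau⌉ : ℝ) + (k : ℝ) * tau) / tau ^ 2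

lemma tau_pos : 0 < tau := by
  have : 0 ≤ Real.sqrt 5 := Real.sqrt_nonneg 5
  rw [tau]; linarith

lemma tau_sq : tau ^ 2 = tau + 1 := by
  have h5 : Real.sqrt 5 ^ 2 = 5 := Real.sq_sqrt (by norm_num)
  rw [tau]; nlinarith [h5]

def gg (j : ℤ) : ℤ := ⌈(j : ℝ) / tau⌉

lemma gap_iff (j : ℤ) : fibChain j - fibChain (j - 1) = 1 ↔ gg j = gg (j - 1) + 1 := by
  have hτ : tau ^ 2 ≠ 0 := pow_ne_zero 2 (ne_of_gt tau_pos)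
  rw [fibChain, fibChain, div_sub_div_same, div_eq_one_iff_eq hτ, tau_sq]
  rw [gg, gg]
  constructor
  · intro h
    have : ((⌈(j : ℝ) / tau⌉ : ℤ) : ℝ) = ((⌈((j - 1 : ℤ) : ℝ) / tau⌉ : ℤ) : ℝ) + 1 := by
      push_cast at h ⊢; linarith
    exact_mod_cast this
  · intro h
    have : ((⌈(j : ℝ) / tau⌉ : ℤ) : ℝ) = ((⌈((j - 1 : ℤ) : ℝ) / tau⌉ : ℤ) : ℝ) + 1 := by
      exact_mod_cast congrArg (fun z : ℤ => (z : ℝ)) h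
    push_cast at this ⊢; linarith

lemma gg_step (j : ℤ) : gg (j - 1) ≤ gg j ∧ gg j ≤ gg (j - 1) + 1 := by
  constructor
  · apply Int.ceil_mono
    have ht := tau_pos
    gcongr
    push_cast; linarith
  · have h1 : (j : ℝ) / tau ≤ ((j - 1 : ℤ) : ℝ) / tau + 1 := by
      have ht := tau_pos
      have h2 : (1 : ℝ) ≤ tau := by
        rw [tau]
        nlinarith [Real.sq_sqrt (show (0:ℝ) ≤ 5 by norm_num), Real.sqrt_nonneg 5]
      rw [div_add' _ _ _ (ne_of_gt ht), div_le_div_iff₀ ht ht]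
      push_cast; nlinarith
    calc gg j ≤ ⌈((j - 1 : ℤ) : ℝ) / tau + 1⌉ := Int.ceil_mono h1
      _ = gg (j - 1) + 1 := by rw [Int.ceil_add_one]; rfl

def Pk (k : ℤ) (i : ℕ) : Prop :=
  fibChain (k + (i : ℤ)) - fibChain (k + (i : ℤ) - 1) = 1

lemma count_eq (k : ℤ) : ∀ M : ℕ, 1 ≤ M →
    (({i : ℕ | 1 ≤ i ∧ i ≤ M - 1 ∧ Pk k i}).ncard : ℤ) = gg (k + M - 1) - gg k := by
  classical
  intro M
  induction M with
  | zero => intro h; omega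
  | succ M ih =>
    intro _
    by_cases hM : 1 ≤ M
    · have hrec := ih hM
      have hfin : ({i : ℕ | 1 ≤ i ∧ i ≤ M - 1 ∧ Pk k i}).Finite :=
        (Set.finite_Icc 1 M).subset (fun i hi => ⟨hi.1, le_trans hi.2.1 (by omega)⟩)
      have hsplit : {i : ℕ | 1 ≤ i ∧ i ≤ M + 1 - 1 ∧ Pk k i}
          = if Pk k M then insert M {i : ℕ | 1 ≤ i ∧ i ≤ M - 1 ∧ Pk k i}
            else {i : ℕ | 1 ≤ i ∧ i ≤ M - 1 ∧ Pk k i} := by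
        by_cases hPM : Pk k M
        · rw [if_pos hPM]
          ext i
          simp only [Set.mem_insert_iff, Set.mem_setOf_eq]
          constructor
          · rintro ⟨h1, h2, h3⟩
            by_cases hiM : i = M
            · exact Or.inl hiM
            · exact Or.inr ⟨h1, by omega, h3⟩
          · rintro (rfl | ⟨h1, h2, h3⟩)
            · exact ⟨hM, by omega, hPM⟩
            · exact ⟨h1, by omega, h3⟩
        · rw [if_neg hPM]
          ext i
          simp only [Set.mem_setOf_eq]
          constructor
          · rintro ⟨h1, h2, h3⟩
            have : i ≠ M := fun h => hPM (h ▸ h3)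
            exact ⟨h1, by omega, h3⟩
          · rintro ⟨h1, h2, h3⟩
            exact ⟨h1, by omega, h3⟩
      have hstep := gg_step (k + M)
      have hgap : Pk k M ↔ gg (k + M) = gg (k + M - 1) + 1 := gap_iff (k + M)
      by_cases hPM : Pk k M
      · rw [hsplit, if_pos hPM]
        have hnotmem : M ∉ {i : ℕ | 1 ≤ i ∧ i ≤ M - 1 ∧ Pk k i} := by
          intro h; exact absurd h.2.1 (by omega)
        rw [Set.ncard_insert_of_notMem hnotmem hfin]
        have hgg : gg (k + M) = gg (k + M - 1) + 1 := hgap.mp hPM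
        push_cast
        rw [show (k + ((M : ℤ) + 1) - 1) = k + M by ring, hgg]
        push_cast at hrec
        omega
      · rw [hsplit, if_neg hPM]
        have hgg : gg (k + M) = gg (k + M - 1) := by
          rcases hstep with ⟨hs1, hs2⟩
          rcases eq_or_lt_of_le hs2 with h | h
          · exact absurd (hgap.mpr h) hPM
          · omega
        rw [show (k + ((M : ℕ) + 1 : ℕ) - 1 : ℤ) = k + M by push_cast; ring, hgg]
        exact hrec
    · have hM0 : M = 0 := by omega
      subst hM0
      have : {i : ℕ | 1 ≤ i ∧ i ≤ 0 ∧ Pk k i} = ∅ := by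
        ext i; simp only [Set.mem_setOf_eq, Set.mem_empty_iff_false, iff_false]
        rintro ⟨h1, h2, _⟩; omega
      rw [this]
      simp

/-- for `k` with `λ_{k+1} - λ_k = 1`, if `N` is the smallest integer
`≥ 1` such that the word `(λ_k, λ_{k+N})` contains exactly `2s - 1` points of
`Λ \ τ²Λ` (i.e. `2s - 1` indices `1 ≤ i ≤ N-1` with gap `λ_{k+i} - λ_{k+i-1} = 1`),
then `N = p` or `N = p + 1` where `p = ⌈(2s-2)τ⌉ + 1`. -/
theorem statement16 (s : ℕ) (hs : 2 ≤ s) (k : ℤ)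
    (hk : fibChain (k + 1) - fibChain k = 1) (N : ℕ)
    (hN : IsLeast {M : ℕ | 1 ≤ M ∧
      ({i : ℕ | 1 ≤ i ∧ i ≤ M - 1 ∧
        fibChain (k + (i : ℤ)) - fibChain (k + (i : ℤ) - 1) = 1}).ncard = 2 * s - 1} N) :
    (N : ℤ) = ⌈((2 * s - 2 : ℕ) : ℝ) * tau⌉ + 1 ∨
      (N : ℤ) = ⌈((2 * s - 2 : ℕ) : ℝ) * tau⌉ + 2 := by
  classical
  obtain ⟨⟨hN1, hNc⟩, hleast⟩ := hN
  have hNc' : ({i : ℕ | 1 ≤ i ∧ i ≤ N - 1 ∧ Pk k i}).ncard = 2 * s - 1 := hNc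
  have hN2 : 2 ≤ N := by
    rcases Nat.lt_or_ge N 2 with h | h
    · exfalso
      have hN1' : N = 1 := by omega
      subst hN1'
      have he : {i : ℕ | 1 ≤ i ∧ i ≤ 1 - 1 ∧ Pk k i} = ∅ := by
        ext i
        simp only [Set.mem_setOf_eq, Set.mem_empty_iff_false, iff_false]
        rintro ⟨a, b, _⟩; omega
      rw [he] at hNc'
      simp at hNc'
      omega
    · exact h
  have hcN := count_eq k N (by omega)
  have hcN1 := count_eq k (N - 1) (by omega)
  rw [hNc'] at hcN
  -- canonical indices
  have e1 : (k + ((N - 1 : ℕ) : ℤ) - 1) = k + (N : ℤ) - 2 := by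
    push_cast [Nat.cast_sub (show 1 ≤ N by omega)]; ring
  rw [e1] at hcN1
  have hne : ({i : ℕ | 1 ≤ i ∧ i ≤ (N - 1) - 1 ∧ Pk k i}).ncard ≠ 2 * s - 1 := by
    intro h
    have hmem : (N - 1) ∈ {M : ℕ | 1 ≤ M ∧
        ({i : ℕ | 1 ≤ i ∧ i ≤ M - 1 ∧
          fibChain (k + (i : ℤ)) - fibChain (k + (i : ℤ) - 1) = 1}).ncard = 2 * s - 1} :=
      ⟨by omega, h⟩
    have := hleast hmem
    omega
  have hstep := gg_step (k + (N : ℤ) - 1)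
  have e2 : (k + (N : ℤ) - 1 - 1) = k + (N : ℤ) - 2 := by ring
  rw [e2] at hstep
  -- f1 : gg (k + N - 1) = gg k + (2s - 1)
  have f1 : gg (k + (N : ℤ) - 1) = gg k + (2 * (s : ℤ) - 1) := by
    have : ((2 * s - 1 : ℕ) : ℤ) = 2 * (s : ℤ) - 1 := by omega
    omega
  have f2 : gg (k + (N : ℤ) - 2) = gg k + (2 * (s : ℤ) - 2) := by
    have hle : ({i : ℕ | 1 ≤ i ∧ i ≤ (N - 1) - 1 ∧ Pk k i}).ncard ≠ 2 * s - 1 := hne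
    have : ((2 * s - 1 : ℕ) : ℤ) = 2 * (s : ℤ) - 1 := by omega
    omega
  -- hk' : gg (k + 1) = gg k + 1
  have hk' : gg (k + 1) = gg k + 1 := by
    have h := (gap_iff (k + 1)).mp (by rw [show k + 1 - 1 = k by ring]; exact hk)
    rw [show k + 1 - 1 = k by ring] at h
    exact h
  -- real inequalities
  have ht := tau_pos
  have R1 : ((gg k : ℝ) + (2 * (s : ℝ) - 2)) * tau < (k : ℝ) + (N : ℝ) - 1 := by
    have h1 : gg k + (2 * (s : ℤ) - 2) < gg (k + (N : ℤ) - 1) := by omega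
    have h2 : ((gg k + (2 * (s : ℤ) - 2) : ℤ) : ℝ) < ((k + (N : ℤ) - 1 : ℤ) : ℝ) / tau :=
      Int.lt_ceil.mp h1
    have h3 := (lt_div_iff₀ ht).mp h2
    push_cast at h3 ⊢
    linarith
  have R2 : (k : ℝ) + (N : ℝ) - 2 ≤ ((gg k : ℝ) + (2 * (s : ℝ) - 2)) * tau := by
    have h1 : gg (k + (N : ℤ) - 2) ≤ gg k + (2 * (s : ℤ) - 2) := by omega
    have h2 : ((k + (N : ℤ) - 2 : ℤ) : ℝ) / tau ≤ ((gg k + (2 * (s : ℤ) - 2) : ℤ) : ℝ) :=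
      Int.ceil_le.mp h1
    have h3 := (div_le_iff₀ ht).mp h2
    push_cast at h3 ⊢
    linarith
  have R3 : (gg k : ℝ) * tau < (k : ℝ) + 1 := by
    have h1 : gg k < gg (k + 1) := by omega
    have h2 : ((gg k : ℤ) : ℝ) < ((k + 1 : ℤ) : ℝ) / tau := Int.lt_ceil.mp h1
    have h3 := (lt_div_iff₀ ht).mp h2
    push_cast at h3 ⊢
    linarith
  have R4 : (k : ℝ) ≤ (gg k : ℝ) * tau := by
    have h2 : ((k : ℤ) : ℝ) / tau ≤ ((gg k : ℤ) : ℝ) := Int.ceil_le.mp (le_refl (gg k))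
    have h3 := (div_le_iff₀ ht).mp h2
    push_cast at h3 ⊢
    linarith
  set C : ℤ := ⌈((2 * s - 2 : ℕ) : ℝ) * tau⌉ with hC
  have hm : ((2 * s - 2 : ℕ) : ℝ) = 2 * (s : ℝ) - 2 := by
    push_cast [Nat.cast_sub (show 2 ≤ 2 * s by omega)]; ring
  have c1 : ((2 * s - 2 : ℕ) : ℝ) * tau ≤ (C : ℝ) := Int.le_ceil _
  have c2 : (C : ℝ) < ((2 * s - 2 : ℕ) : ℝ) * tau + 1 := Int.ceil_lt_add_one _
  rw [hm] at c1 c2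
  have upper : (N : ℤ) < C + 3 := by
    have : (N : ℝ) < (C : ℝ) + 3 := by nlinarith
    exact_mod_cast this
  have lower : C < (N : ℤ) := by
    have : (C : ℝ) < (N : ℝ) := by nlinarith
    exact_mod_cast this
  omega
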